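/- arXiv:1905.08241 — 2 statements merged into one kernel-verified Lean document; each statement's English description precedes it below -/
import Mathlib

section
/- Let (Σ,μ) be a σ-finite measure space, 1 ≤ p < ∞, Y an arbitrary Banach space, and Ω : L_p(μ) → Y a quasi-linear map. If Ω is locally disjointly trivial then Ω is locally trivial (and conversely); that is, local disjoint triviality and local triviality are equivalent for quasi-linear maps on L_p(μ). -/
open MeasureTheory
open scoped ENNReal

noncomputable section

section Defs

variable {X Y : Type*} [NormedAddCommGroup X] [NormedSpace ℝ X]
  [NormedAddCommGroup Y] [NormedSpace ℝ Y]

/-- `Ω` is quasi-linear: homogeneous and quasi-additive. -/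
def IsQuasiLinear (Ω : X → Y) : Prop :=
  (∀ (c : ℝ) (x : X), Ω (c • x) = c • Ω x) ∧
    ∃ Q : ℝ, 0 ≤ Q ∧ ∀ x y : X, ‖Ω (x + y) - Ω x - Ω y‖ ≤ Q * (‖x‖ + ‖y‖)

/-- `Ω` is `C`-trivial on the subspace `E`: some (possibly discontinuous) linear map
`L : E → Y` is at distance at most `C` from `Ω` on `E`. -/
def TrivialOnWith (Ω : X → Y) (E : Submodule ℝ X) (C : ℝ) : Prop :=
  ∃ L : E →ₗ[ℝ] Y, ∀ x : E, ‖Ω x - L x‖ ≤ C * ‖(x : X)‖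

/-- `Ω` is trivial on the subspace `E`. -/
def TrivialOn (Ω : X → Y) (E : Submodule ℝ X) : Prop :=
  ∃ C : ℝ, 0 ≤ C ∧ TrivialOnWith Ω E C

/-- `Ω` is trivial. -/
def IsTrivial (Ω : X → Y) : Prop := TrivialOn Ω ⊤

/-- `Ω` is locally trivial: a uniform constant works for all finite-dimensional subspaces. -/
def LocallyTrivial (Ω : X → Y) : Prop :=
  ∃ C : ℝ, 0 < C ∧ ∀ F : Submodule ℝ X, FiniteDimensional ℝ F → TrivialOnWith Ω F C

end Defs

section LpDefs

variable {α : Type*} [MeasurableSpace α] {μ : Measure α} {q : ℝ≥0∞}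
  {Y : Type*} [NormedAddCommGroup Y] [NormedSpace ℝ Y]

/-- Two elements of `L_p(μ)` are disjointly supported (up to null sets). -/
def DisjSupp (f g : Lp ℝ q μ) : Prop := ∀ᵐ a ∂μ, f a = 0 ∨ g a = 0

/-- `Ω` is disjointly trivial: it is trivial on every closed subspace generated by a
sequence of disjointly supported elements. -/
def DisjointlyTrivial [Fact (1 ≤ q)] (Ω : Lp ℝ q μ → Y) : Prop :=
  ∀ u : ℕ → Lp ℝ q μ, Pairwise (fun i j => DisjSupp (u i) (u j)) →
    TrivialOn Ω (Submodule.span ℝ (Set.range u)).topologicalClosure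

/-- `Ω` is locally disjointly trivial: a uniform constant works for all finite-dimensional
subspaces spanned by finitely many disjointly supported vectors. -/
def LocallyDisjointlyTrivial [Fact (1 ≤ q)] (Ω : Lp ℝ q μ → Y) : Prop :=
  ∃ C : ℝ, 0 < C ∧ ∀ (n : ℕ) (u : Fin n → Lp ℝ q μ),
    Pairwise (fun i j => DisjSupp (u i) (u j)) →
    TrivialOnWith Ω (Submodule.span ℝ (Set.range u)) C

end LpDefs

section AuxQL
variable {X Y : Type*} [NormedAddCommGroup X] [NormedSpace ℝ X]
  [NormedAddCommGroup Y] [NormedSpace ℝ Y]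

lemma quasi_zero' {Ω : X → Y} (hhom : ∀ (c : ℝ) (x : X), Ω (c • x) = c • Ω x) :
    Ω 0 = 0 := by
  have := hhom 0 0
  simpa using this

lemma quasi_sum' {Ω : X → Y} (hhom : ∀ (c : ℝ) (x : X), Ω (c • x) = c • Ω x)
    {Q : ℝ} (hQ0 : 0 ≤ Q)
    (hQ : ∀ x y : X, ‖Ω (x + y) - Ω x - Ω y‖ ≤ Q * (‖x‖ + ‖y‖)) :
    ∀ (n : ℕ) (y : Fin n → X),
      ‖Ω (∑ i, y i) - ∑ i, Ω (y i)‖ ≤ Q * n * ∑ i, ‖y i‖ := by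
  intro n
  induction n with
  | zero => intro y; simp [quasi_zero' hhom]
  | succ n ih =>
    intro y
    set S := ∑ i : Fin n, y i.castSucc with hS
    set l := y (Fin.last n) with hl
    have key : Ω (∑ i, y i) - ∑ i, Ω (y i) =
        (Ω (S + l) - Ω S - Ω l) + (Ω S - ∑ i : Fin n, Ω (y i.castSucc)) := by
      rw [Fin.sum_univ_castSucc y, Fin.sum_univ_castSucc (fun i => Ω (y i))]
      abel
    have h1 : ‖Ω (S + l) - Ω S - Ω l‖ ≤ Q * (‖S‖ + ‖l‖) := hQ S l
    have h2 := ih (fun i => y i.castSucc)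
    have hSle : ‖S‖ ≤ ∑ i : Fin n, ‖y i.castSucc‖ := norm_sum_le _ _
    have hT : ∑ i, ‖y i‖ = (∑ i : Fin n, ‖y i.castSucc‖) + ‖l‖ :=
      Fin.sum_univ_castSucc (fun i => ‖y i‖)
    have hl0 : (0:ℝ) ≤ ‖l‖ := norm_nonneg _
    have hTn0 : (0:ℝ) ≤ ∑ i : Fin n, ‖y i.castSucc‖ :=
      Finset.sum_nonneg fun _ _ => norm_nonneg _
    calc ‖Ω (∑ i, y i) - ∑ i, Ω (y i)‖
        ≤ ‖Ω (S + l) - Ω S - Ω l‖ + ‖Ω S - ∑ i : Fin n, Ω (y i.castSucc)‖ := by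
          rw [key]; exact norm_add_le _ _
      _ ≤ Q * (‖S‖ + ‖l‖) + Q * n * ∑ i : Fin n, ‖y i.castSucc‖ := add_le_add h1 h2
      _ ≤ Q * ((n:ℝ)+1) * ∑ i, ‖y i‖ := by
          rw [hT]
          nlinarith [mul_le_mul_of_nonneg_left hSle hQ0,
            mul_nonneg (mul_nonneg hQ0 (Nat.cast_nonneg n : (0:ℝ) ≤ n)) hl0]
      _ = Q * ((n+1 : ℕ) : ℝ) * ∑ i, ‖y i‖ := by push_cast; ring

lemma exists_coord_bound' {n : ℕ} (F : Submodule ℝ X) [FiniteDimensional ℝ F]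
    (b : Module.Basis (Fin n) ℝ F) :
    ∃ K : ℝ, 1 ≤ K ∧ ∀ x : F, ∑ i, |b.equivFun x i| ≤ K * ‖x‖ := by
  set ci : Fin n → (F →L[ℝ] ℝ) := fun i => LinearMap.toContinuousLinearMap (b.coord i)
  refine ⟨max (∑ i, ‖ci i‖) 1, le_max_right _ _, fun x => ?_⟩
  have h1 : ∑ i, |b.equivFun x i| ≤ (∑ i, ‖ci i‖) * ‖x‖ := by
    rw [Finset.sum_mul]
    refine Finset.sum_le_sum fun i _ => ?_
    have : |b.equivFun x i| = ‖ci i x‖ := by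
      simp [ci, Module.Basis.equivFun_apply, Module.Basis.coord_apply, Real.norm_eq_abs]
    rw [this]
    exact (ci i).le_opNorm x
  refine h1.trans (mul_le_mul_of_nonneg_right (le_max_left _ _) (norm_nonneg _))

end AuxQL

section AuxLp
variable {α : Type*} [MeasurableSpace α] {μ : Measure α} {q : ℝ≥0∞}

lemma Lp_coeFn_sum' {ι : Type*} (s : Finset ι) (f : ι → Lp ℝ q μ) :
    ⇑(∑ i ∈ s, f i) =ᵐ[μ] fun a => ∑ i ∈ s, f i a := by
  classical
  induction s using Finset.cons_induction with
  | empty => simp only [Finset.sum_empty]; exact Lp.coeFn_zero ℝ q μ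
  | cons i s hi ih =>
    rw [Finset.sum_cons]
    filter_upwards [Lp.coeFn_add (f i) (∑ j ∈ s, f j), ih] with a h1 h2
    rw [Finset.sum_cons, h1, Pi.add_apply, h2]
end AuxLp


set_option maxHeartbeats 2000000 in
/-- For quasi-linear maps on `L_p(μ)` (`σ`-finite measure, `1 ≤ p < ∞`)
with values in an arbitrary Banach space, local disjoint triviality and local triviality
are equivalent. -/
theorem locallyDisjointlyTrivial_iff_locallyTrivial
    {α : Type*} [MeasurableSpace α] {μ : Measure α} [SigmaFinite μ]
    {q : ℝ≥0∞} [Fact (1 ≤ q)] (hq : q ≠ ∞)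
    {Y : Type*} [NormedAddCommGroup Y] [NormedSpace ℝ Y] [CompleteSpace Y]
    (Ω : Lp ℝ q μ → Y) (hΩ : IsQuasiLinear Ω) :
    LocallyDisjointlyTrivial Ω ↔ LocallyTrivial Ω := by
  classical
  obtain ⟨hhom, Q, hQ0, hQ⟩ := hΩ
  have hq0 : q ≠ 0 := by
    have h1 : (1:ℝ≥0∞) ≤ q := Fact.out
    exact fun h => by simp [h] at h1
  constructor
  · rintro ⟨C, hC, h⟩
    refine ⟨3*Q + 2*C + 1, by linarith, fun F hF => ?_⟩
    haveI := hF
    set n := Module.finrank ℝ F with hn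
    set b : Module.Basis (Fin n) ℝ F := Module.finBasis ℝ F with hb
    obtain ⟨K, hK1, hK⟩ := exists_coord_bound' F b
    have hK0 : (0:ℝ) < K := lt_of_lt_of_le one_pos hK1
    set ε : ℝ := 1 / ((n + 1) * K * (Q + 1)) with hε
    have hεpos : 0 < ε := by
      apply div_pos one_pos
      positivity
    -- approximate basis vectors by simple functions
    have hstep : ∀ i : Fin n, ∃ s : Lp.simpleFunc ℝ q μ,
        ‖(b i : Lp ℝ q μ) - ↑s‖ ≤ ε := by
      intro i
      obtain ⟨s, hs⟩ := (Lp.simpleFunc.denseRange (E := ℝ) (μ := μ) hq).exists_dist_lt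
        (b i : Lp ℝ q μ) hεpos
      exact ⟨s, by rw [← dist_eq_norm]; exact hs.le⟩
    choose s hs using hstep
    set w : Fin n → Lp ℝ q μ := fun i => (s i : Lp ℝ q μ) with hw
    set f : Fin n → SimpleFunc α ℝ := fun i => Lp.simpleFunc.toSimpleFunc (s i) with hf
    have hfw : ∀ i, (f i : α → ℝ) =ᵐ[μ] w i := fun i =>
      Lp.simpleFunc.toSimpleFunc_eq_toFun (s i)
    -- the common refinement
    set g : α → (Fin n → ℝ) := fun a i => f i a with hg
    have hrange : (Set.range g).Finite := by
      refine Set.Finite.subset (Set.Finite.pi (fun i => (f i).finite_range)) ?_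
      rintro - ⟨a, rfl⟩ i -
      exact ⟨a, rfl⟩
    set t : Finset (Fin n → ℝ) := hrange.toFinset.filter (fun v => v ≠ 0) with ht
    set A : (Fin n → ℝ) → Set α := fun v => g ⁻¹' {v} with hA
    have hAeq : ∀ v, A v = ⋂ i, (f i) ⁻¹' {v i} := by
      intro v
      ext a
      simp [hA, hg, Set.mem_iInter, funext_iff]
    have hAmeas : ∀ v, MeasurableSet (A v) := by
      intro v
      rw [hAeq v]
      exact MeasurableSet.iInter fun i => (f i).measurableSet_fiber (v i)
    have hAfin : ∀ v ∈ t, μ (A v) ≠ ∞ := by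
      intro v hv
      have hv0 : v ≠ 0 := (Finset.mem_filter.mp hv).2
      obtain ⟨i, hi⟩ := Function.ne_iff.mp hv0
      have hsub : A v ⊆ (f i) ⁻¹' {v i} := by
        intro a ha
        have : g a = v := ha
        simp only [Set.mem_preimage, Set.mem_singleton_iff]
        rw [← this]
      have hfin := SimpleFunc.measure_preimage_lt_top_of_memLp hq0 hq (f i)
        (Lp.simpleFunc.memLp (s i)) (v i) hi
      exact ((measure_mono hsub).trans_lt hfin).ne
    set u' : {v // v ∈ t} → Lp ℝ q μ :=
      fun v => indicatorConstLp q (hAmeas v) (hAfin v v.2) (1:ℝ) with hu'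
    set m := t.card with hm
    set e : {v // v ∈ t} ≃ Fin m := t.equivFin with he
    set u : Fin m → Lp ℝ q μ := u' ∘ e.symm with hu
    have hdisj : Pairwise (fun i j => DisjSupp (u i) (u j)) := by
      intro i j hij
      have hne : (e.symm i : Fin n → ℝ) ≠ (e.symm j : Fin n → ℝ) := by
        intro hcontra
        exact hij (by simpa using congrArg e (Subtype.ext hcontra))
      have hco : ∀ k : Fin m, ⇑(u k) =ᵐ[μ]
          (A (e.symm k)).indicator (fun _ => (1:ℝ)) := fun k =>
        indicatorConstLp_coeFn (hs := hAmeas _) (hμs := hAfin _ (e.symm k).2)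
      filter_upwards [hco i, hco j] with a h1 h2
      by_cases hmem : a ∈ A (e.symm i)
      · right
        have hnot : a ∉ A (e.symm j) := by
          intro hmem2
          exact hne ((Set.mem_preimage.mp hmem).symm.trans (Set.mem_preimage.mp hmem2))
        rw [h2, Set.indicator_of_notMem hnot]
      · left
        rw [h1, Set.indicator_of_notMem hmem]
    set G := Submodule.span ℝ (Set.range u) with hG
    obtain ⟨Lg, hLg⟩ := h m u hdisj
    -- each w i lies in G
    have hwsum : ∀ i, w i = ∑ v ∈ t.attach, ((v : Fin n → ℝ) i) • u' v := by
      intro i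
      refine (Lp.ext ?_).symm
      have haef : ∀ᵐ a ∂μ, ∀ v : {v // v ∈ t},
          (((v : Fin n → ℝ) i) • u' v) a
            = ((v : Fin n → ℝ) i) * (A v).indicator (fun _ => (1:ℝ)) a := by
        rw [ae_all_iff]
        intro v
        filter_upwards [Lp.coeFn_smul ((v : Fin n → ℝ) i) (u' v),
          indicatorConstLp_coeFn (p := q) (hs := hAmeas v) (hμs := hAfin _ v.2)
            (c := (1:ℝ))] with a h1 h2
        rw [h1, Pi.smul_apply, h2, smul_eq_mul]
      filter_upwards [Lp_coeFn_sum' t.attach (fun v => ((v : Fin n → ℝ) i) • u' v),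
        haef, hfw i] with a h1 h2 h3
      rw [h1]
      have h4 : ∑ v ∈ t.attach, (((v : Fin n → ℝ) i) • u' v) a
          = ∑ v ∈ t.attach, ((v : Fin n → ℝ) i) * (A v).indicator (fun _ => (1:ℝ)) a :=
        Finset.sum_congr rfl fun v _ => h2 v
      rw [h4, Finset.sum_attach t (fun v => v i * (A v).indicator (fun _ => (1:ℝ)) a), ← h3]
      -- pointwise computation
      by_cases h0 : g a = 0
      · have hz : ∀ v ∈ t, v i * (A v).indicator (fun _ => (1:ℝ)) a = 0 := by
          intro v hv
          have hvne : v ≠ 0 := (Finset.mem_filter.mp hv).2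
          have hnm : a ∉ A v := by
            intro hmem
            exact hvne (((Set.mem_preimage.mp hmem) : g a = v).symm.trans h0)
          rw [Set.indicator_of_notMem hnm, mul_zero]
        have hfia : (f i) a = 0 := congrFun h0 i
        rw [Finset.sum_eq_zero hz, hfia]
      · have hmt : g a ∈ t :=
          Finset.mem_filter.mpr ⟨hrange.mem_toFinset.mpr ⟨a, rfl⟩, h0⟩
        rw [Finset.sum_eq_single (g a)]
        · have hmem : a ∈ A (g a) := Set.mem_preimage.mpr rfl
          rw [Set.indicator_of_mem hmem, mul_one]
        · intro v hv hvne
          have hnm : a ∉ A v := by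
            intro hmem
            exact hvne ((Set.mem_preimage.mp hmem) : g a = v).symm
          rw [Set.indicator_of_notMem hnm, mul_zero]
        · intro hcontra; exact absurd hmt hcontra
    have hwG : ∀ i, w i ∈ G := by
      intro i
      rw [hwsum i]
      refine Submodule.sum_mem _ fun v _ =>
        Submodule.smul_mem _ _ (Submodule.subset_span ⟨e v, ?_⟩)
      simp [hu]
    -- the linear map on F
    set wG : Fin n → G := fun i => ⟨w i, hwG i⟩ with hwGdef
    set L : F →ₗ[ℝ] Y :=
      b.constr ℝ (fun i => Lg (wG i) + Ω ((b i : Lp ℝ q μ) - w i)) with hL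
    refine ⟨L, fun x => ?_⟩
    set c : Fin n → ℝ := b.equivFun x with hc
    have hnx : ‖x‖ = ‖(x : Lp ℝ q μ)‖ := rfl
    have hxF : ∑ i, c i • b i = x := b.sum_equivFun x
    have hx : (x : Lp ℝ q μ) = ∑ i, c i • ((b i : F) : Lp ℝ q μ) := by
      have h' := congrArg (F.subtype) hxF
      simpa [map_sum, _root_.map_smul] using h'.symm
    set Tg : G := ∑ i, c i • wG i with hTgdef
    have hTg : ((Tg : Lp ℝ q μ)) = ∑ i, c i • w i := by
      have h' : G.subtype Tg = G.subtype (∑ i, c i • wG i) := rfl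
      simpa [map_sum, _root_.map_smul, hwGdef] using h'
    set D : Lp ℝ q μ := ∑ i, c i • ((b i : Lp ℝ q μ) - w i) with hDdef
    have hxTD : (x : Lp ℝ q μ) = (Tg : Lp ℝ q μ) + D := by
      rw [hTg, hDdef, ← Finset.sum_add_distrib, hx]
      refine Finset.sum_congr rfl fun i _ => ?_
      rw [← smul_add]
      congr 1
      abel
    have hLx : L x = Lg Tg + ∑ i, c i • Ω ((b i : Lp ℝ q μ) - w i) := by
      rw [hL, Module.Basis.constr_apply_fintype]
      simp only [smul_add, Finset.sum_add_distrib, ← hc]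
      congr 1
      rw [hTgdef, map_sum]
      exact Finset.sum_congr rfl fun i _ => (_root_.map_smul Lg (c i) (wG i)).symm
    have hkey : Ω (x : Lp ℝ q μ) - L x =
        (Ω ((Tg : Lp ℝ q μ) + D) - Ω (Tg : Lp ℝ q μ) - Ω D)
        + (Ω (Tg : Lp ℝ q μ) - Lg Tg)
        + (Ω D - ∑ i, c i • Ω ((b i : Lp ℝ q μ) - w i)) := by
      rw [hLx, hxTD]
      abel
    -- norm estimates
    have hcK : ∑ i, |c i| ≤ K * ‖(x : Lp ℝ q μ)‖ := by rw [← hnx]; exact hK x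
    have hsumy : ∑ i, ‖c i • ((b i : Lp ℝ q μ) - w i)‖ ≤ ε * (K * ‖(x : Lp ℝ q μ)‖) := by
      calc ∑ i, ‖c i • ((b i : Lp ℝ q μ) - w i)‖
          ≤ ∑ i, |c i| * ε := by
            refine Finset.sum_le_sum fun i _ => ?_
            rw [norm_smul, Real.norm_eq_abs]
            exact mul_le_mul_of_nonneg_left (hs i) (abs_nonneg _)
        _ = ε * ∑ i, |c i| := by rw [← Finset.sum_mul]; ring
        _ ≤ ε * (K * ‖(x : Lp ℝ q μ)‖) := mul_le_mul_of_nonneg_left hcK hεpos.le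
    have hεK : ε * K = 1 / (((n:ℝ) + 1) * (Q + 1)) := by
      rw [hε]
      field_simp
    have hεK1 : ε * K ≤ 1 := by
      rw [hεK]
      rw [div_le_one (by positivity)]
      nlinarith [(Nat.cast_nonneg n : (0:ℝ) ≤ (n:ℝ))]
    have hQn : Q * (n:ℝ) * (ε * K) ≤ 1 := by
      rw [hεK, mul_one_div, div_le_one (by positivity)]
      nlinarith [(Nat.cast_nonneg n : (0:ℝ) ≤ (n:ℝ))]
    have hdx : ‖D‖ ≤ ‖(x : Lp ℝ q μ)‖ := by
      have h1 : ‖D‖ ≤ ε * (K * ‖(x : Lp ℝ q μ)‖) := (norm_sum_le _ _).trans hsumy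
      calc ‖D‖ ≤ (ε * K) * ‖(x : Lp ℝ q μ)‖ := by rw [mul_assoc]; exact h1
        _ ≤ 1 * ‖(x : Lp ℝ q μ)‖ := mul_le_mul_of_nonneg_right hεK1 (norm_nonneg _)
        _ = ‖(x : Lp ℝ q μ)‖ := one_mul _
    have hTx : ‖(Tg : Lp ℝ q μ)‖ ≤ 2 * ‖(x : Lp ℝ q μ)‖ := by
      have h1 : (Tg : Lp ℝ q μ) = (x : Lp ℝ q μ) - D := by rw [hxTD]; abel
      calc ‖(Tg : Lp ℝ q μ)‖ = ‖(x : Lp ℝ q μ) - D‖ := by rw [h1]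
        _ ≤ ‖(x : Lp ℝ q μ)‖ + ‖D‖ := norm_sub_le _ _
        _ ≤ 2 * ‖(x : Lp ℝ q μ)‖ := by linarith
    have e1 : ‖Ω ((Tg : Lp ℝ q μ) + D) - Ω (Tg : Lp ℝ q μ) - Ω D‖
        ≤ Q * (‖(Tg : Lp ℝ q μ)‖ + ‖D‖) := hQ _ _
    have e2 : ‖Ω (Tg : Lp ℝ q μ) - Lg Tg‖ ≤ C * ‖(Tg : Lp ℝ q μ)‖ := hLg Tg
    have e3 : ‖Ω D - ∑ i, c i • Ω ((b i : Lp ℝ q μ) - w i)‖ ≤ ‖(x : Lp ℝ q μ)‖ := by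
      have heq : ∑ i, c i • Ω ((b i : Lp ℝ q μ) - w i)
          = ∑ i, Ω (c i • ((b i : Lp ℝ q μ) - w i)) :=
        Finset.sum_congr rfl fun i _ => (hhom _ _).symm
      have h3 := quasi_sum' hhom hQ0 hQ n (fun i => c i • ((b i : Lp ℝ q μ) - w i))
      rw [heq, hDdef]
      refine (h3.trans ?_)
      calc Q * (n:ℝ) * ∑ i, ‖c i • ((b i : Lp ℝ q μ) - w i)‖
          ≤ Q * (n:ℝ) * (ε * (K * ‖(x : Lp ℝ q μ)‖)) := by
            refine mul_le_mul_of_nonneg_left hsumy ?_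
            positivity
        _ = (Q * (n:ℝ) * (ε * K)) * ‖(x : Lp ℝ q μ)‖ := by ring
        _ ≤ 1 * ‖(x : Lp ℝ q μ)‖ := mul_le_mul_of_nonneg_right hQn (norm_nonneg _)
        _ = ‖(x : Lp ℝ q μ)‖ := one_mul _
    calc ‖Ω (x : Lp ℝ q μ) - L x‖
        ≤ ‖Ω ((Tg : Lp ℝ q μ) + D) - Ω (Tg : Lp ℝ q μ) - Ω D‖
          + ‖Ω (Tg : Lp ℝ q μ) - Lg Tg‖
          + ‖Ω D - ∑ i, c i • Ω ((b i : Lp ℝ q μ) - w i)‖ := by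
            rw [hkey]; exact norm_add₃_le
      _ ≤ (3 * Q + 2 * C + 1) * ‖(x : Lp ℝ q μ)‖ := by
          nlinarith [norm_nonneg D, norm_nonneg (Tg : Lp ℝ q μ),
            norm_nonneg (x : Lp ℝ q μ), hC.le,
            mul_le_mul_of_nonneg_left hTx hC.le,
            mul_le_mul_of_nonneg_left (add_le_add hTx hdx) hQ0]
  · rintro ⟨C, hC, h⟩
    exact ⟨C, hC, fun n u _ =>
      h _ (FiniteDimensional.span_of_finite ℝ (Set.finite_range u))⟩
end
end

section
/- Let (Σ,μ) be a σ-finite measure space, 1 ≤ p < ∞, let Ω be an L∞-centralizer on L_p(μ) with centralizer constant C(Ω), and let u_1,…,u_n be pairwise disjointly supported functions in L_p(μ) with linear span E. If there is a linear map L : E → L⁰(μ) with Ω(x) − L(x) ∈ L_p and ‖Ω(x) − L(x)‖_p ≤ C‖x‖_p for all x ∈ E, then there is a linear map L' : E → L⁰(μ) such that supp L'(x) ⊆ supp x a.e. for every x ∈ E, and Ω(x) − L'(x) ∈ L_p with ‖Ω(x) − L'(x)‖_p ≤ (C + C(Ω))‖x‖_p for all x ∈ E. (L' is obtained by averaging v·L(v·x)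 over the finite group of ±1-valued functions generated by those taking value 1 on supp u_i and −1 elsewhere.) -/
open MeasureTheory
open scoped ENNReal

noncomputable section

section L0Defs

variable {α : Type*} [MeasurableSpace α] {μ : Measure α} {q : ℝ≥0∞}

/-- `Ω : L_p(μ) → L⁰(μ)` is trivial on a subspace `E`: some (possibly discontinuous) linear
map `L : E → L⁰` satisfies that `Ω - L` takes values in `L_p` on `E` and is bounded there. -/
def L0TrivialOn (Ω : Lp ℝ q μ → (α →ₘ[μ] ℝ)) (E : Submodule ℝ (Lp ℝ q μ)) : Prop :=
  ∃ (L : E →ₗ[ℝ] (α →ₘ[μ] ℝ)) (C : ℝ), 0 ≤ C ∧ ∀ x : E,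
    eLpNorm (⇑(Ω x - L x)) q μ ≤ ENNReal.ofReal (C * ‖(x : Lp ℝ q μ)‖)

/-- `Ω : L_p(μ) → L⁰(μ)` is an `L_∞`-centralizer with constant `C`: it is homogeneous and,
whenever `y = f·x` in `L⁰` with `f ∈ L_∞` and `x ∈ L_p`, the difference `Ω(f x) - f·Ω(x)`
has `L_p`-norm at most `C‖f‖_∞‖x‖_p` (in particular it lies in `L_p`). -/
def IsCentralizerWith (Ω : Lp ℝ q μ → (α →ₘ[μ] ℝ)) (C : ℝ) : Prop :=
  (∀ (c : ℝ) (x : Lp ℝ q μ), Ω (c • x) = c • Ω x) ∧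
    ∀ f : α →ₘ[μ] ℝ, f ∈ Lp ℝ ⊤ μ → ∀ x y : Lp ℝ q μ, (y : α →ₘ[μ] ℝ) = f * ↑x →
      eLpNorm (⇑(Ω y - f * Ω x)) q μ ≤
        ENNReal.ofReal (C * (eLpNorm (⇑f) ⊤ μ).toReal * ‖x‖)

/-- `Ω` is quasi-linear as a map with values in `L⁰` relative to the `L_p` norm. -/
def L0QuasiLinear (Ω : Lp ℝ q μ → (α →ₘ[μ] ℝ)) : Prop :=
  ∃ Q : ℝ, 0 ≤ Q ∧ ∀ x y : Lp ℝ q μ,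
    eLpNorm (⇑(Ω (x + y) - Ω x - Ω y)) q μ ≤ ENNReal.ofReal (Q * (‖x‖ + ‖y‖))

/-- `Ω` is contractive: `supp Ω(x) ⊆ supp x` a.e. -/
def Contractive (Ω : Lp ℝ q μ → (α →ₘ[μ] ℝ)) : Prop :=
  ∀ x : Lp ℝ q μ, ∀ᵐ a ∂μ, x a = 0 → Ω x a = 0

/-- `Ω` is disjointly singular: its restriction to the closed linear span of every sequence
of nonzero pairwise disjointly supported elements is not trivial. -/
def L0DisjointlySingular [Fact (1 ≤ q)] (Ω : Lp ℝ q μ → (α →ₘ[μ] ℝ)) : Prop :=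
  ∀ u : ℕ → Lp ℝ q μ, (∀ n, u n ≠ 0) → Pairwise (fun i j => DisjSupp (u i) (u j)) →
    ¬ L0TrivialOn Ω (Submodule.span ℝ (Set.range u)).topologicalClosure

/-- The average `∇_{[b]}Ω` over all choices of signs of
`‖Ω (∑ ± b_k) - ∑ ± Ω(b_k)‖_p` (computed in `ℝ≥0∞`). -/
def nabla (Ω : Lp ℝ q μ → (α →ₘ[μ] ℝ)) {n : ℕ} (b : Fin n → Lp ℝ q μ) : ℝ≥0∞ :=
  (2 ^ n : ℝ≥0∞)⁻¹ * ∑ ε : Fin n → Bool,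
    eLpNorm (⇑(Ω (∑ k, (if ε k then (1:ℝ) else -1) • b k)
      - ∑ k, (if ε k then (1:ℝ) else -1) • Ω (b k))) q μ

end L0Defs
open scoped NNReal
private def sg (b : Bool) : ℝ := if b then 1 else -1

private lemma sg_mul_self (b : Bool) : sg b * sg b = 1 := by cases b <;> norm_num [sg]
private lemma abs_sg (b : Bool) : |sg b| = 1 := by cases b <;> norm_num [sg]
private lemma sg_not (b : Bool) : sg (!b) = - sg b := by cases b <;> norm_num [sg]
private lemma sum_sg : ∑ b : Bool, sg b = 0 := by simp [sg]

private lemma sum_sg_mul {n : ℕ} (i j : Fin n) (hij : i ≠ j) :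
    ∑ η : Fin n → Bool, sg (η i) * sg (η j) = 0 := by
  classical
  have hinv : Function.Involutive (fun η : Fin n → Bool => Function.update η i (!(η i))) := by
    intro η; funext k
    rcases eq_or_ne k i with rfl | hk
    · simp
    · simp [Function.update_of_ne hk]
  have h := Equiv.sum_comp hinv.toPerm (fun η : Fin n → Bool => sg (η i) * sg (η j))
  have h2 : ∀ η : Fin n → Bool,
      sg ((Function.update η i (!(η i))) i) * sg ((Function.update η i (!(η i))) j)
        = -(sg (η i) * sg (η j)) := by
    intro η
    rw [Function.update_self, Function.update_of_ne hij.symm, sg_not]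
    ring
  have h3 : ∑ η : Fin n → Bool, sg (η i) * sg (η j)
      = - ∑ η : Fin n → Bool, sg (η i) * sg (η j) := by
    conv_lhs => rw [← h]
    rw [← Finset.sum_neg_distrib]
    refine Finset.sum_congr rfl fun η _ => ?_
    simp only [Function.Involutive.coe_toPerm]
    exact (h2 η).trans (by ring)
  linarith

private lemma sum_sg_sq {n : ℕ} (i : Fin n) :
    ∑ η : Fin n → Bool, sg (η i) * sg (η i) = 2 ^ n := by
  classical
  have : ∀ η : Fin n → Bool, sg (η i) * sg (η i) = 1 := fun η => sg_mul_self _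
  rw [Finset.sum_congr rfl fun η _ => this η]
  simp [Finset.card_univ, Fintype.card_fun]

private lemma keyA {n : ℕ} (i : Fin n) (t : Fin n → ℝ) :
    ∑ ε : Bool × (Fin n → Bool), sg (ε.2 i) * ∑ j, sg (ε.2 j) * t j
      = 2 ^ (n + 1) * t i := by
  classical
  rw [Fintype.sum_prod_type]
  have inner : ∑ η : Fin n → Bool, sg (η i) * ∑ j, sg (η j) * t j = 2 ^ n * t i := by
    have e1 : ∀ η : Fin n → Bool,
        sg (η i) * ∑ j, sg (η j) * t j = ∑ j, (sg (η i) * sg (η j)) * t j := by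
      intro η; rw [Finset.mul_sum]
      exact Finset.sum_congr rfl fun j _ => by ring
    rw [Finset.sum_congr rfl fun η _ => e1 η, Finset.sum_comm]
    have e2 : ∀ j : Fin n,
        ∑ η : Fin n → Bool, (sg (η i) * sg (η j)) * t j
          = (∑ η : Fin n → Bool, sg (η i) * sg (η j)) * t j := by
      intro j; rw [Finset.sum_mul]
    rw [Finset.sum_congr rfl fun j _ => e2 j]
    rw [Finset.sum_eq_single i]
    · rw [sum_sg_sq]
    · intro j _ hj
      rw [sum_sg_mul i j (Ne.symm hj)]
      ring
    · intro h; exact absurd (Finset.mem_univ i) h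
  rw [Finset.sum_congr rfl fun b _ => inner]
  simp
  ring

private lemma keyB {n : ℕ} (t : Fin n → ℝ) :
    ∑ ε : Bool × (Fin n → Bool), sg ε.1 * ∑ j, sg (ε.2 j) * t j = 0 := by
  classical
  rw [Fintype.sum_prod_type]
  have e1 : ∀ b : Bool, ∑ η : Fin n → Bool, sg b * ∑ j, sg (η j) * t j
      = sg b * ∑ η : Fin n → Bool, ∑ j, sg (η j) * t j := by
    intro b; rw [Finset.mul_sum]
  rw [Finset.sum_congr rfl fun b _ => e1 b, ← Finset.sum_mul, sum_sg, zero_mul]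

private lemma card_bool_pi (n : ℕ) :
    (Fintype.card (Bool × (Fin n → Bool)) : ℕ) = 2 ^ (n + 1) := by
  classical
  simp [Fintype.card_prod, Fintype.card_fun]
  ring

section AeHelpers
variable {α : Type*} [MeasurableSpace α] {μ : Measure α}

private lemma aeeqFun_coeFn_sum {ι : Type*} (s : Finset ι) (f : ι → (α →ₘ[μ] ℝ)) :
    ⇑(∑ i ∈ s, f i) =ᵐ[μ] fun a => ∑ i ∈ s, f i a := by
  classical
  induction s using Finset.induction_on with
  | empty =>
    filter_upwards [MeasureTheory.AEEqFun.coeFn_zero (μ := μ) (β := ℝ)] with a h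
    simpa using h
  | @insert i s' h ih =>
    rw [Finset.sum_insert h]
    filter_upwards [MeasureTheory.AEEqFun.coeFn_add (f i) (∑ j ∈ s', f j), ih] with a h1 h2
    simp only [Finset.sum_insert h, h1, Pi.add_apply, h2]

private lemma lp_coeFn_sum {q : ℝ≥0∞} {ι : Type*} (s : Finset ι) (f : ι → Lp ℝ q μ) :
    ⇑(∑ i ∈ s, f i) =ᵐ[μ] fun a => ∑ i ∈ s, f i a := by
  classical
  induction s using Finset.induction_on with
  | empty =>
    filter_upwards [MeasureTheory.Lp.coeFn_zero (E := ℝ) (p := q) (μ := μ)] with a h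
    simpa using h
  | @insert i s' h ih =>
    rw [Finset.sum_insert h]
    filter_upwards [MeasureTheory.Lp.coeFn_add (f i) (∑ j ∈ s', f j), ih] with a h1 h2
    simp only [Finset.sum_insert h, h1, Pi.add_apply, h2]

end AeHelpers

set_option maxHeartbeats 2000000 in
/-- If an `L_∞`-centralizer `Ω` on `L_p(μ)` with constant `CΩ` is
`C`-trivial on the span `E` of finitely many disjointly supported functions via a linear
map `L`, then it is `(C + CΩ)`-trivial on `E` via a support-preserving linear map. -/
theorem exists_support_preserving_linear_map
    {α : Type*} [MeasurableSpace α] {μ : Measure α} [SigmaFinite μ]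
    {q : ℝ≥0∞} [Fact (1 ≤ q)] (hq : q ≠ ∞)
    (Ω : Lp ℝ q μ → (α →ₘ[μ] ℝ)) (CΩ : ℝ)
    (hcen : IsCentralizerWith Ω CΩ)
    (n : ℕ) (u : Fin n → Lp ℝ q μ)
    (hdisj : Pairwise (fun i j => DisjSupp (u i) (u j)))
    (C : ℝ) (hC : 0 ≤ C)
    (L : (Submodule.span ℝ (Set.range u)) →ₗ[ℝ] (α →ₘ[μ] ℝ))
    (hL : ∀ x : Submodule.span ℝ (Set.range u),
      eLpNorm (⇑(Ω x - L x)) q μ ≤ ENNReal.ofReal (C * ‖(x : Lp ℝ q μ)‖)) :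
    ∃ L' : (Submodule.span ℝ (Set.range u)) →ₗ[ℝ] (α →ₘ[μ] ℝ),
      (∀ x : Submodule.span ℝ (Set.range u), ∀ᵐ a ∂μ,
        (x : Lp ℝ q μ) a = 0 → (L' x) a = 0) ∧
      ∀ x : Submodule.span ℝ (Set.range u),
        eLpNorm (⇑(Ω x - L' x)) q μ ≤ ENNReal.ofReal ((C + CΩ) * ‖(x : Lp ℝ q μ)‖) := by

  classical
  have hq1 : (1:ℝ≥0∞) ≤ q := Fact.out
  have hq0 : q ≠ 0 := by
    intro h; rw [h] at hq1; exact (by norm_num : ¬ ((1:ℝ≥0∞) ≤ 0)) hq1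
  -- measurable representatives
  have hmeas : ∀ j, AEStronglyMeasurable (⇑(u j)) μ := fun j => (Lp.aestronglyMeasurable (u j))
  set g : Fin n → α → ℝ := fun j => (hmeas j).mk _ with hg
  have hgmeas : ∀ j, StronglyMeasurable (g j) := fun j => (hmeas j).stronglyMeasurable_mk
  have hgae : ∀ j, ⇑(u j) =ᵐ[μ] g j := fun j => (hmeas j).ae_eq_mk
  set B : Fin n → Set α := fun j => {a | g j a ≠ 0} with hBdef
  have hB : ∀ j, MeasurableSet (B j) := by
    intro j
    have : B j = (g j) ⁻¹' ({0}ᶜ) := rfl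
    rw [this]
    exact ((hgmeas j).measurable) (measurableSet_singleton 0).compl
  set A : Fin n → Set α := fun j => B j \ ⋃ i, ⋃ (_ : i ≠ j), B i with hAdef
  have hA : ∀ j, MeasurableSet (A j) := fun j =>
    (hB j).diff (MeasurableSet.iUnion fun i => MeasurableSet.iUnion fun _ => hB i)
  have hAsub : ∀ j, A j ⊆ B j := fun j => Set.diff_subset
  have hAdisj : ∀ i j : Fin n, i ≠ j → ∀ a, a ∈ A i → a ∉ A j := by
    intro i j hij a hai haj
    exact hai.2 (Set.mem_iUnion.2 ⟨j, Set.mem_iUnion.2 ⟨Ne.symm hij, haj.1⟩⟩)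
  have hBnull : ∀ i j : Fin n, i ≠ j → μ (B i ∩ B j) = 0 := by
    intro i j hij
    have h1 : ∀ᵐ a ∂μ, g i a = 0 ∨ g j a = 0 := by
      filter_upwards [hdisj hij, hgae i, hgae j] with a h hi hj
      rw [← hi, ← hj]; exact h
    refine measure_mono_null ?_ (ae_iff.1 h1)
    intro a ⟨hai, haj⟩
    simp only [Set.mem_setOf_eq]
    push_neg
    exact ⟨hai, haj⟩
  have hBA : ∀ j, μ (B j \ A j) = 0 := by
    intro j
    have hsub : B j \ A j ⊆ ⋃ i, ⋃ (_ : i ≠ j), (B i ∩ B j) := by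
      intro a ⟨haB, haN⟩
      have : a ∈ ⋃ i, ⋃ (_ : i ≠ j), B i := by
        by_contra hc
        exact haN ⟨haB, hc⟩
      obtain ⟨i, hi⟩ := Set.mem_iUnion.1 this
      obtain ⟨hij, hBi⟩ := Set.mem_iUnion.1 hi
      exact Set.mem_iUnion.2 ⟨i, Set.mem_iUnion.2 ⟨hij, ⟨hBi, haB⟩⟩⟩
    exact measure_mono_null hsub
      (measure_iUnion_null fun i => measure_iUnion_null fun hij => hBnull i j hij)
  have hu_off : ∀ j, ∀ᵐ a ∂μ, a ∉ A j → ⇑(u j) a = 0 := by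
    intro j
    have h2 : ∀ᵐ a ∂μ, a ∉ B j \ A j := by
      rw [ae_iff]
      simp only [not_not, Set.setOf_mem_eq]; exact hBA j
    filter_upwards [hgae j, h2] with a hga hBAa hnA
    by_contra hne
    have haB : a ∈ B j := by
      simp only [hBdef, Set.mem_setOf_eq]
      rw [← hga]; exact hne
    exact hBAa ⟨haB, hnA⟩
  have hu_on : ∀ j, ∀ᵐ a ∂μ, a ∈ A j → ⇑(u j) a ≠ 0 := by
    intro j
    filter_upwards [hgae j] with a hga haA
    rw [hga]
    exact (hAsub j haA)
  -- indicator classes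
  set χ : Fin n → (α →ₘ[μ] ℝ) := fun j =>
    AEEqFun.mk ((A j).indicator (fun _ => (1:ℝ)))
      ((measurable_const.indicator (hA j)).aestronglyMeasurable) with hχdef
  -- right inverse of the representation map
  set e : Fin n → (Submodule.span ℝ (Set.range u)) := fun j => ⟨u j, Submodule.subset_span (Set.mem_range_self j)⟩ with hedef
  set Ψ : (Fin n → ℝ) →ₗ[ℝ] (Submodule.span ℝ (Set.range u)) :=
    ∑ j, LinearMap.smulRight (LinearMap.proj j) (e j) with hΨdef
  have hΨapp : ∀ c : Fin n → ℝ, Ψ c = ∑ j, c j • e j := by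
    intro c
    rw [hΨdef, LinearMap.sum_apply]
    exact Finset.sum_congr rfl fun j _ => rfl
  have hΨsurj : LinearMap.range Ψ = ⊤ := by
    rw [LinearMap.range_eq_top]
    intro x
    have hx : (x : Lp ℝ q μ) ∈ Submodule.span ℝ (Set.range u) := x.2
    rw [Submodule.mem_span_range_iff_exists_fun] at hx
    obtain ⟨c, hc⟩ := hx
    refine ⟨c, ?_⟩
    apply Subtype.ext
    rw [hΨapp]
    rw [AddSubmonoidClass.coe_finset_sum]
    simpa using hc
  have hproj : Module.Projective ℝ (Submodule.span ℝ (Set.range u)) := by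
    set_option synthInstance.maxHeartbeats 1000000 in infer_instance
  obtain ⟨ρ, hρ⟩ := LinearMap.exists_rightInverse_of_surjective Ψ hΨsurj
  have hrep : ∀ x : (Submodule.span ℝ (Set.range u)), ∑ j, ρ x j • e j = x := by
    intro x
    have := congrArg (fun φ : (Submodule.span ℝ (Set.range u)) →ₗ[ℝ] (Submodule.span ℝ (Set.range u)) => φ x) hρ
    simp only [LinearMap.comp_apply, LinearMap.id_apply] at this
    rw [← hΨapp]; exact this
  have hrepLp : ∀ x : (Submodule.span ℝ (Set.range u)), (x : Lp ℝ q μ) = ∑ j, ρ x j • u j := by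
    intro x
    conv_lhs => rw [← hrep x]
    rw [AddSubmonoidClass.coe_finset_sum]
    rfl
  have hxae : ∀ x : (Submodule.span ℝ (Set.range u)), ∀ᵐ a ∂μ, (x : Lp ℝ q μ) a = ∑ j, ρ x j * ⇑(u j) a := by
    intro x
    have h1 : ⇑((x : Lp ℝ q μ)) =ᵐ[μ] ⇑(∑ j, ρ x j • u j) := by rw [← hrepLp x]
    have h2 := lp_coeFn_sum (μ := μ) (q := q) Finset.univ (fun j => ρ x j • u j)
    have h3 : ∀ᵐ a ∂μ, ∀ j, (ρ x j • u j) a = ρ x j * ⇑(u j) a := by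
      rw [MeasureTheory.ae_all_iff]
      intro j
      filter_upwards [Lp.coeFn_smul (ρ x j) (u j)] with a ha
      rw [ha]; rfl
    filter_upwards [h1, h2, h3] with a h1 h2 h3
    rw [h1, h2]
    exact Finset.sum_congr rfl fun j _ => h3 j
  -- the general support-preserving construction
  set Lm : (Fin n → (α →ₘ[μ] ℝ)) → ((Submodule.span ℝ (Set.range u)) →ₗ[ℝ] (α →ₘ[μ] ℝ)) := fun v =>
    (∑ j, LinearMap.smulRight (LinearMap.proj j) (χ j * v j)).comp ρ with hLmdef
  have hLmapp : ∀ v x, Lm v x = ∑ j, ρ x j • (χ j * v j) := by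
    intro v x
    rw [hLmdef]
    simp only [LinearMap.comp_apply, LinearMap.sum_apply]
    exact Finset.sum_congr rfl fun j _ => rfl
  have hLmae : ∀ v (x : (Submodule.span ℝ (Set.range u))), ⇑(Lm v x) =ᵐ[μ]
      fun a => ∑ j, ρ x j * ((A j).indicator (fun _ => (1:ℝ)) a * ⇑(v j) a) := by
    intro v x
    have h1 : ⇑(Lm v x) =ᵐ[μ] ⇑(∑ j, ρ x j • (χ j * v j)) := by rw [hLmapp]
    have h2 := aeeqFun_coeFn_sum (μ := μ) Finset.univ (fun j => ρ x j • (χ j * v j))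
    have h3 : ∀ᵐ a ∂μ, ∀ j : Fin n,
        (ρ x j • (χ j * v j)) a = ρ x j * ((A j).indicator (fun _ => (1:ℝ)) a * ⇑(v j) a) := by
      rw [MeasureTheory.ae_all_iff]
      intro j
      filter_upwards [AEEqFun.coeFn_smul (ρ x j) (χ j * v j),
        AEEqFun.coeFn_mul (χ j) (v j),
        AEEqFun.coeFn_mk ((A j).indicator (fun _ => (1:ℝ)))
          ((measurable_const.indicator (hA j)).aestronglyMeasurable)] with a ha hb hc
      rw [ha]
      simp only [Pi.smul_apply, smul_eq_mul]
      rw [hb]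
      simp only [Pi.mul_apply]
      rw [hc]
    filter_upwards [h1, h2, h3] with a h1 h2 h3
    rw [h1, h2]
    exact Finset.sum_congr rfl fun j _ => h3 j
  have hsupp : ∀ v, ∀ x : (Submodule.span ℝ (Set.range u)), ∀ᵐ a ∂μ, (x : Lp ℝ q μ) a = 0 → (Lm v x) a = 0 := by
    intro v x
    filter_upwards [hxae x, hLmae v x, MeasureTheory.ae_all_iff.2 hu_off,
      MeasureTheory.ae_all_iff.2 hu_on] with a ha hla hoff hon hx0
    rw [hla]
    by_cases hex : ∃ i, a ∈ A i
    · obtain ⟨i, hi⟩ := hex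
      have hothers : ∀ j, j ≠ i → ⇑(u j) a = 0 := fun j hj =>
        hoff j (fun hAj => hAdisj i j (Ne.symm hj) a hi hAj)
      have hxa : (x : Lp ℝ q μ) a = ρ x i * ⇑(u i) a := by
        rw [ha]
        exact Finset.sum_eq_single i (fun j _ hj => by rw [hothers j hj, mul_zero])
          (fun h => absurd (Finset.mem_univ i) h)
      have hci : ρ x i = 0 := by
        rcases mul_eq_zero.1 (hxa ▸ hx0) with h | h
        · exact h
        · exact absurd h (hon i hi)
      refine Finset.sum_eq_zero fun j _ => ?_
      rcases eq_or_ne j i with rfl | hj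
      · rw [hci, zero_mul]
      · rw [Set.indicator_of_notMem (fun hAj => hAdisj i j (Ne.symm hj) a hi hAj), zero_mul,
          mul_zero]
    · push_neg at hex
      refine Finset.sum_eq_zero fun j _ => ?_
      rw [Set.indicator_of_notMem (hex j), zero_mul, mul_zero]
  have hχae : ∀ j, ⇑(χ j) =ᵐ[μ] (A j).indicator (fun _ => (1:ℝ)) := by
    intro j; simp only [hχdef]; exact AEEqFun.coeFn_mk _ _
  have hχmem : ∀ j, χ j ∈ Lp ℝ ⊤ μ := by
    intro j
    rw [Lp.mem_Lp_iff_memLp]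
    refine memLp_top_of_bound (AEEqFun.aestronglyMeasurable _) 1 ?_
    filter_upwards [hχae j] with a ha
    rw [ha]
    by_cases hm : a ∈ A j
    · rw [Set.indicator_of_mem hm]; norm_num
    · rw [Set.indicator_of_notMem hm]; norm_num
  rcases lt_or_ge CΩ 0 with hneg | hpos
  · -- CΩ < 0 : the centralizer is exact, use Ω itself to build L'
    have hex : ∀ f : α →ₘ[μ] ℝ, f ∈ Lp ℝ ⊤ μ → ∀ z y : Lp ℝ q μ,
        (y : α →ₘ[μ] ℝ) = f * ↑z → Ω y = f * Ω z := by
      intro f hf z y hy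
      have h1 := hcen.2 f hf z y hy
      have h2 : CΩ * (eLpNorm (⇑f) ⊤ μ).toReal * ‖z‖ ≤ 0 := by
        have h3 : (0:ℝ) ≤ (eLpNorm (⇑f) ⊤ μ).toReal := ENNReal.toReal_nonneg
        have h4 : (0:ℝ) ≤ ‖z‖ := norm_nonneg z
        nlinarith [mul_nonneg h3 h4]
      rw [ENNReal.ofReal_eq_zero.2 h2] at h1
      have h4 : ⇑(Ω y - f * Ω z) =ᵐ[μ] 0 :=
        (eLpNorm_eq_zero_iff (AEEqFun.aestronglyMeasurable _) hq0).1
          (le_antisymm h1 zero_le)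
      have h5 : Ω y - f * Ω z = 0 :=
        AEEqFun.ext (h4.trans (AEEqFun.coeFn_zero (μ := μ)).symm)
      exact sub_eq_zero.1 h5
    have hΩ0 : Ω (0 : Lp ℝ q μ) = 0 := by
      have := hcen.1 0 0
      rwa [zero_smul, zero_smul] at this
    refine ⟨Lm (fun j => Ω (u j)), hsupp _, ?_⟩
    intro x
    have hyj : ∀ j, ((ρ x j • u j : Lp ℝ q μ) : α →ₘ[μ] ℝ)
        = χ j * ((x : Lp ℝ q μ) : α →ₘ[μ] ℝ) := by
      intro j
      refine AEEqFun.ext ?_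
      filter_upwards [Lp.coeFn_smul (ρ x j) (u j),
        AEEqFun.coeFn_mul (χ j) ((x : Lp ℝ q μ) : α →ₘ[μ] ℝ), hχae j,
        hxae x, MeasureTheory.ae_all_iff.2 hu_off, hu_on j] with a h1 h2 h3 hx hoff hon
      show ((ρ x j • u j : Lp ℝ q μ) : α → ℝ) a = _
      rw [h1, h2]
      simp only [Pi.smul_apply, Pi.mul_apply, smul_eq_mul]
      rw [h3]
      by_cases hm : a ∈ A j
      · rw [Set.indicator_of_mem hm, one_mul, hx]
        have : ∀ k, k ≠ j → ⇑(u k) a = 0 := fun k hk =>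
          hoff k (fun hAk => hAdisj j k (Ne.symm hk) a hm hAk)
        rw [Finset.sum_eq_single j (fun k _ hk => by rw [this k hk, mul_zero])
          (fun h => absurd (Finset.mem_univ j) h)]
      · rw [Set.indicator_of_notMem hm, zero_mul, hoff j hm, mul_zero]
    have hEq : ∀ j, ρ x j • Ω (u j) = χ j * Ω ((x : Lp ℝ q μ)) := by
      intro j
      rw [← hcen.1 (ρ x j) (u j)]
      exact hex (χ j) (hχmem j) (x : Lp ℝ q μ) (ρ x j • u j) (hyj j)
    -- the complement indicator
    have hScompl : MeasurableSet ((⋃ j, A j)ᶜ) := (MeasurableSet.iUnion hA).compl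
    set χ₀ : α →ₘ[μ] ℝ := AEEqFun.mk ((⋃ j, A j)ᶜ.indicator (fun _ => (1:ℝ)))
      ((measurable_const.indicator hScompl).aestronglyMeasurable) with hχ₀def
    have hχ₀ae : ⇑χ₀ =ᵐ[μ] (⋃ j, A j)ᶜ.indicator (fun _ => (1:ℝ)) := by
      simp only [hχ₀def]; exact AEEqFun.coeFn_mk _ _
    have hχ₀mem : χ₀ ∈ Lp ℝ ⊤ μ := by
      rw [Lp.mem_Lp_iff_memLp]
      refine memLp_top_of_bound (AEEqFun.aestronglyMeasurable _) 1 ?_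
      filter_upwards [hχ₀ae] with a ha
      rw [ha]
      by_cases hm : a ∈ (⋃ j, A j)ᶜ
      · rw [Set.indicator_of_mem hm]; norm_num
      · rw [Set.indicator_of_notMem hm]; norm_num
    have hy0 : (((0 : Lp ℝ q μ)) : α →ₘ[μ] ℝ) = χ₀ * ((x : Lp ℝ q μ) : α →ₘ[μ] ℝ) := by
      refine AEEqFun.ext ?_
      filter_upwards [Lp.coeFn_zero (E := ℝ) (p := q) (μ := μ),
        AEEqFun.coeFn_mul χ₀ ((x : Lp ℝ q μ) : α →ₘ[μ] ℝ), hχ₀ae,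
        hxae x, MeasureTheory.ae_all_iff.2 hu_off] with a h1 h2 h3 hx hoff
      show ((0 : Lp ℝ q μ) : α → ℝ) a = _
      rw [h1, h2]
      simp only [Pi.zero_apply, Pi.mul_apply]
      rw [h3]
      by_cases hm : a ∈ ⋃ j, A j
      · rw [Set.indicator_of_notMem (by simpa using hm), zero_mul]
      · rw [Set.indicator_of_mem (by simpa using hm), one_mul, hx]
        refine (Finset.sum_eq_zero fun j _ => ?_).symm
        rw [hoff j (fun hAj => hm (Set.mem_iUnion.2 ⟨j, hAj⟩)), mul_zero]
    have hEq0 : (0 : α →ₘ[μ] ℝ) = χ₀ * Ω ((x : Lp ℝ q μ)) := by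
      rw [← hΩ0]
      exact hex χ₀ hχ₀mem (x : Lp ℝ q μ) 0 hy0
    have hptj : ∀ᵐ a ∂μ, ∀ j, ρ x j * ⇑(Ω (u j)) a
        = (A j).indicator (fun _ => (1:ℝ)) a * ⇑(Ω ((x : Lp ℝ q μ))) a := by
      rw [MeasureTheory.ae_all_iff]
      intro j
      filter_upwards [AEEqFun.coeFn_smul (ρ x j) (Ω (u j)),
        AEEqFun.coeFn_mul (χ j) (Ω ((x : Lp ℝ q μ))), hχae j] with a h1 h2 h3
      calc ρ x j * ⇑(Ω (u j)) a = (ρ x j • Ω (u j)) a := by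
            rw [h1]; simp
        _ = (χ j * Ω ((x : Lp ℝ q μ))) a := by rw [hEq j]
        _ = _ := by rw [h2]; simp only [Pi.mul_apply]; rw [h3]
    have hpt0 : ∀ᵐ a ∂μ, (0:ℝ)
        = (⋃ j, A j)ᶜ.indicator (fun _ => (1:ℝ)) a * ⇑(Ω ((x : Lp ℝ q μ))) a := by
      filter_upwards [AEEqFun.coeFn_mul χ₀ (Ω ((x : Lp ℝ q μ))), hχ₀ae,
        AEEqFun.coeFn_zero (μ := μ) (β := ℝ)] with a h2 h3 h0
      calc (0:ℝ) = ⇑(0 : α →ₘ[μ] ℝ) a := by rw [h0]; rfl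
        _ = (χ₀ * Ω ((x : Lp ℝ q μ))) a := by rw [← hEq0]
        _ = _ := by rw [h2]; simp only [Pi.mul_apply]; rw [h3]
    have hfin : ⇑(Ω ((x : Lp ℝ q μ)) - Lm (fun j => Ω (u j)) x) =ᵐ[μ] 0 := by
      filter_upwards [AEEqFun.coeFn_sub (Ω ((x : Lp ℝ q μ))) (Lm (fun j => Ω (u j)) x),
        hLmae (fun j => Ω (u j)) x, hptj, hpt0] with a h1 h2 h3 h0
      rw [h1]
      simp only [Pi.sub_apply, Pi.zero_apply]
      rw [h2]
      have hterm : ∀ j, ρ x j * ((A j).indicator (fun _ => (1:ℝ)) a * ⇑(Ω (u j)) a)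
          = (A j).indicator (fun _ => (1:ℝ)) a * ⇑(Ω ((x : Lp ℝ q μ))) a := by
        intro j
        by_cases hm : a ∈ A j
        · have h' := h3 j
          rw [Set.indicator_of_mem hm, one_mul] at h'
          rw [Set.indicator_of_mem hm, one_mul, one_mul]
          exact h'
        · rw [Set.indicator_of_notMem hm]; ring
      rw [Finset.sum_congr rfl fun j _ => hterm j]
      by_cases hex2 : ∃ i, a ∈ A i
      · obtain ⟨i, hi⟩ := hex2
        rw [Finset.sum_eq_single i (fun j _ hj => by
            rw [Set.indicator_of_notMem (fun hAj => hAdisj i j (Ne.symm hj) a hi hAj), zero_mul])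
          (fun h => absurd (Finset.mem_univ i) h), Set.indicator_of_mem hi, one_mul, sub_self]
      · push_neg at hex2
        rw [Finset.sum_eq_zero fun j _ => by rw [Set.indicator_of_notMem (hex2 j), zero_mul]]
        have : ⇑(Ω ((x : Lp ℝ q μ))) a = 0 := by
          have hm : a ∈ (⋃ j, A j)ᶜ := by
            simp only [Set.mem_compl_iff, Set.mem_iUnion]
            push_neg; exact hex2
          rw [Set.indicator_of_mem hm, one_mul] at h0
          exact h0.symm
        rw [this, sub_zero]
    rw [eLpNorm_congr_ae hfin, eLpNorm_zero]
    exact zero_le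
  · -- 0 ≤ CΩ : averaging over signs
    refine ⟨Lm (fun j => L (e j)), hsupp _, ?_⟩
    intro x
    -- sign functions
    set w : (Bool × (Fin n → Bool)) → α → ℝ := fun ε a =>
      sg ε.1 + ∑ j, (A j).indicator (fun _ => sg (ε.2 j) - sg ε.1) a with hwdef
    have hwmeas : ∀ ε, Measurable (w ε) := fun ε =>
      measurable_const.add (Finset.measurable_sum Finset.univ fun j _ =>
        measurable_const.indicator (hA j))
    have hw_on : ∀ ε i a, a ∈ A i → w ε a = sg (ε.2 i) := by
      intro ε i a ha
      simp only [hwdef]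
      rw [Finset.sum_eq_single i (fun j _ hj => Set.indicator_of_notMem
          (fun hAj => hAdisj i j (Ne.symm hj) a ha hAj) _)
        (fun h => absurd (Finset.mem_univ i) h), Set.indicator_of_mem ha]
      ring
    have hw_off : ∀ ε a, (∀ i, a ∉ A i) → w ε a = sg ε.1 := by
      intro ε a ha
      simp only [hwdef]
      rw [Finset.sum_eq_zero fun j _ => Set.indicator_of_notMem (ha j) _, add_zero]
    have habs : ∀ ε a, |w ε a| = 1 := by
      intro ε a
      by_cases hex2 : ∃ i, a ∈ A i
      · obtain ⟨i, hi⟩ := hex2; rw [hw_on ε i a hi]; exact abs_sg _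
      · push_neg at hex2; rw [hw_off ε a hex2]; exact abs_sg _
    have hwsq : ∀ ε a, w ε a * w ε a = 1 := by
      intro ε a
      rw [← abs_mul_abs_self, habs, one_mul]
    set W : (Bool × (Fin n → Bool)) → (α →ₘ[μ] ℝ) := fun ε =>
      AEEqFun.mk (w ε) (hwmeas ε).aestronglyMeasurable with hWdef
    have hWae : ∀ ε, ⇑(W ε) =ᵐ[μ] w ε := fun ε => by
      simp only [hWdef]; exact AEEqFun.coeFn_mk _ _
    have hWmem : ∀ ε, W ε ∈ Lp ℝ ⊤ μ := by
      intro ε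
      rw [Lp.mem_Lp_iff_memLp]
      refine memLp_top_of_bound (AEEqFun.aestronglyMeasurable _) 1 ?_
      filter_upwards [hWae ε] with a ha
      rw [ha, Real.norm_eq_abs, habs]
    have hWnorm : ∀ ε, (eLpNorm (⇑(W ε)) ⊤ μ).toReal ≤ 1 := by
      intro ε
      have h1 : eLpNorm (⇑(W ε)) ⊤ μ ≤ ENNReal.ofReal 1 := by
        rw [eLpNorm_exponent_top]
        refine eLpNormEssSup_le_of_ae_bound ?_
        filter_upwards [hWae ε] with a ha
        rw [ha, Real.norm_eq_abs, habs]
      have h2 := ENNReal.toReal_mono (by simp) h1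
      simpa using h2
    -- the sign-flipped vectors
    set xE : (Bool × (Fin n → Bool)) → (Submodule.span ℝ (Set.range u)) := fun ε => ∑ j, (sg (ε.2 j) * ρ x j) • e j with hxEdef
    have hxEcoe : ∀ ε, ((xE ε : (Submodule.span ℝ (Set.range u))) : Lp ℝ q μ) = ∑ j, (sg (ε.2 j) * ρ x j) • u j := by
      intro ε
      simp only [hxEdef]
      rw [AddSubmonoidClass.coe_finset_sum]
      rfl
    have hxEae : ∀ ε, ∀ᵐ a ∂μ,
        ((xE ε : (Submodule.span ℝ (Set.range u))) : Lp ℝ q μ) a = ∑ j, sg (ε.2 j) * ρ x j * ⇑(u j) a := by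
      intro ε
      have h1 : ⇑(((xE ε : (Submodule.span ℝ (Set.range u))) : Lp ℝ q μ)) =ᵐ[μ] ⇑(∑ j, (sg (ε.2 j) * ρ x j) • u j) := by
        rw [hxEcoe ε]
      have h2 := lp_coeFn_sum (μ := μ) (q := q) Finset.univ
        (fun j => (sg (ε.2 j) * ρ x j) • u j)
      have h3 : ∀ᵐ a ∂μ, ∀ j,
          ((sg (ε.2 j) * ρ x j) • u j) a = sg (ε.2 j) * ρ x j * ⇑(u j) a := by
        rw [MeasureTheory.ae_all_iff]; intro j
        filter_upwards [Lp.coeFn_smul (sg (ε.2 j) * ρ x j) (u j)] with a ha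
        rw [ha]; rfl
      filter_upwards [h1, h2, h3] with a h1 h2 h3
      rw [h1, h2]; exact Finset.sum_congr rfl fun j _ => h3 j
    have hxεeq : ∀ ε, (((xE ε : (Submodule.span ℝ (Set.range u))) : Lp ℝ q μ) : α →ₘ[μ] ℝ)
        = W ε * ((x : Lp ℝ q μ) : α →ₘ[μ] ℝ) := by
      intro ε
      refine AEEqFun.ext ?_
      filter_upwards [hxEae ε, AEEqFun.coeFn_mul (W ε) ((x : Lp ℝ q μ) : α →ₘ[μ] ℝ),
        hWae ε, hxae x, MeasureTheory.ae_all_iff.2 hu_off] with a h1 h2 h3 hx hoff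
      show (((xE ε : (Submodule.span ℝ (Set.range u))) : Lp ℝ q μ) : α → ℝ) a = _
      rw [h1, h2]
      simp only [Pi.mul_apply]
      rw [h3]
      by_cases hex2 : ∃ i, a ∈ A i
      · obtain ⟨i, hi⟩ := hex2
        have hothers : ∀ j, j ≠ i → ⇑(u j) a = 0 := fun j hj =>
          hoff j (fun hAj => hAdisj i j (Ne.symm hj) a hi hAj)
        rw [hw_on ε i a hi, hx]
        rw [Finset.sum_eq_single i (fun j _ hj => by rw [hothers j hj, mul_zero])
            (fun h => absurd (Finset.mem_univ i) h),
          Finset.sum_eq_single i (fun j _ hj => by rw [hothers j hj, mul_zero])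
            (fun h => absurd (Finset.mem_univ i) h)]
        ring
      · push_neg at hex2
        rw [hx, Finset.sum_eq_zero fun j _ => by rw [hoff j (hex2 j), mul_zero],
          Finset.sum_eq_zero fun j _ => by rw [hoff j (hex2 j), mul_zero], mul_zero]
    have hxEnorm : ∀ ε, ‖((xE ε : (Submodule.span ℝ (Set.range u))) : Lp ℝ q μ)‖ = ‖(x : Lp ℝ q μ)‖ := by
      intro ε
      rw [Lp.norm_def, Lp.norm_def]
      congr 1
      refine eLpNorm_congr_norm_ae ?_
      filter_upwards [AEEqFun.coeFn_mul (W ε) ((x : Lp ℝ q μ) : α →ₘ[μ] ℝ), hWae ε]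
        with a h2 h3
      have h4 : (((xE ε : (Submodule.span ℝ (Set.range u))) : Lp ℝ q μ) : α → ℝ) a
          = (W ε * ((x : Lp ℝ q μ) : α →ₘ[μ] ℝ)) a := by rw [hxεeq ε]
      rw [h4, h2]
      simp only [Pi.mul_apply]
      rw [h3, Real.norm_eq_abs, Real.norm_eq_abs, abs_mul, habs, one_mul]
    have hD1 : ∀ ε, eLpNorm (⇑(Ω (((xE ε : (Submodule.span ℝ (Set.range u))) : Lp ℝ q μ)) - W ε * Ω ((x : Lp ℝ q μ)))) q μ
        ≤ ENNReal.ofReal (CΩ * ‖(x : Lp ℝ q μ)‖) := by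
      intro ε
      refine le_trans (hcen.2 (W ε) (hWmem ε) ((x : Lp ℝ q μ))
        (((xE ε : (Submodule.span ℝ (Set.range u))) : Lp ℝ q μ)) (hxεeq ε)) ?_
      apply ENNReal.ofReal_le_ofReal
      have h4 : (0:ℝ) ≤ ‖(x : Lp ℝ q μ)‖ := norm_nonneg _
      nlinarith [mul_nonneg (mul_nonneg hpos h4) (sub_nonneg.2 (hWnorm ε)),
        ENNReal.toReal_nonneg (a := eLpNorm (⇑(W ε)) ⊤ μ)]
    have hD2 : ∀ ε, eLpNorm (⇑(Ω (((xE ε : (Submodule.span ℝ (Set.range u))) : Lp ℝ q μ)) - L (xE ε))) q μ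
        ≤ ENNReal.ofReal (C * ‖(x : Lp ℝ q μ)‖) := by
      intro ε
      have h := hL (xE ε)
      rwa [hxEnorm ε] at h
    have hFbound : ∀ ε, eLpNorm (⇑(Ω ((x : Lp ℝ q μ)) - W ε * L (xE ε))) q μ
        ≤ ENNReal.ofReal ((C + CΩ) * ‖(x : Lp ℝ q μ)‖) := by
      intro ε
      have hEn : eLpNorm (⇑(Ω ((x : Lp ℝ q μ)) - W ε * L (xE ε))) q μ
          = eLpNorm (⇑((Ω (((xE ε : (Submodule.span ℝ (Set.range u))) : Lp ℝ q μ)) - L (xE ε))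
              - (Ω (((xE ε : (Submodule.span ℝ (Set.range u))) : Lp ℝ q μ)) - W ε * Ω ((x : Lp ℝ q μ))))) q μ := by
        refine eLpNorm_congr_norm_ae ?_
        filter_upwards [AEEqFun.coeFn_sub (Ω ((x : Lp ℝ q μ))) (W ε * L (xE ε)),
          AEEqFun.coeFn_mul (W ε) (L (xE ε)),
          AEEqFun.coeFn_sub (Ω (((xE ε : (Submodule.span ℝ (Set.range u))) : Lp ℝ q μ)) - L (xE ε))
            (Ω (((xE ε : (Submodule.span ℝ (Set.range u))) : Lp ℝ q μ)) - W ε * Ω ((x : Lp ℝ q μ))),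
          AEEqFun.coeFn_sub (Ω (((xE ε : (Submodule.span ℝ (Set.range u))) : Lp ℝ q μ))) (L (xE ε)),
          AEEqFun.coeFn_sub (Ω (((xE ε : (Submodule.span ℝ (Set.range u))) : Lp ℝ q μ))) (W ε * Ω ((x : Lp ℝ q μ))),
          AEEqFun.coeFn_mul (W ε) (Ω ((x : Lp ℝ q μ))), hWae ε] with a h1 h2 h3 h4 h5 h6 hw
        simp only [Pi.sub_apply, Pi.mul_apply] at h1 h2 h3 h4 h5 h6
        simp only [h1, h2, h3, h4, h5, h6, Pi.sub_apply, Pi.mul_apply, hw]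
        have hw2 := hwsq ε a
        rw [show ⇑(Ω (((xE ε : (Submodule.span ℝ (Set.range u))) : Lp ℝ q μ))) a - ⇑(L (xE ε)) a
            - (⇑(Ω (((xE ε : (Submodule.span ℝ (Set.range u))) : Lp ℝ q μ))) a - w ε a * ⇑(Ω ((x : Lp ℝ q μ))) a)
            = w ε a * ⇑(Ω ((x : Lp ℝ q μ))) a - ⇑(L (xE ε)) a from by ring]
        rw [show ⇑(Ω ((x : Lp ℝ q μ))) a - w ε a * ⇑(L (xE ε)) a
            = w ε a * (w ε a * ⇑(Ω ((x : Lp ℝ q μ))) a - ⇑(L (xE ε)) a) from by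
          rw [mul_sub, ← mul_assoc, hw2, one_mul]]
        rw [Real.norm_eq_abs, Real.norm_eq_abs, abs_mul, habs, one_mul]
      rw [hEn]
      calc eLpNorm (⇑((Ω (((xE ε : (Submodule.span ℝ (Set.range u))) : Lp ℝ q μ)) - L (xE ε))
              - (Ω (((xE ε : (Submodule.span ℝ (Set.range u))) : Lp ℝ q μ)) - W ε * Ω ((x : Lp ℝ q μ))))) q μ
          = eLpNorm (⇑(Ω (((xE ε : (Submodule.span ℝ (Set.range u))) : Lp ℝ q μ)) - L (xE ε))
              - ⇑(Ω (((xE ε : (Submodule.span ℝ (Set.range u))) : Lp ℝ q μ)) - W ε * Ω ((x : Lp ℝ q μ)))) q μ :=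
            eLpNorm_congr_ae (AEEqFun.coeFn_sub _ _)
        _ ≤ eLpNorm (⇑(Ω (((xE ε : (Submodule.span ℝ (Set.range u))) : Lp ℝ q μ)) - L (xE ε))) q μ
              + eLpNorm (⇑(Ω (((xE ε : (Submodule.span ℝ (Set.range u))) : Lp ℝ q μ)) - W ε * Ω ((x : Lp ℝ q μ)))) q μ :=
            eLpNorm_sub_le (AEEqFun.aestronglyMeasurable _)
              (AEEqFun.aestronglyMeasurable _) hq1
        _ ≤ ENNReal.ofReal (C * ‖(x : Lp ℝ q μ)‖)
              + ENNReal.ofReal (CΩ * ‖(x : Lp ℝ q μ)‖) := add_le_add (hD2 ε) (hD1 ε)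
        _ = ENNReal.ofReal ((C + CΩ) * ‖(x : Lp ℝ q μ)‖) := by
            rw [← ENNReal.ofReal_add (mul_nonneg hC (norm_nonneg _))
              (mul_nonneg hpos (norm_nonneg _))]
            congr 1
            ring
    -- linearity of L on the sign-flipped vectors
    have hLxE : ∀ ε, L (xE ε) = ∑ j, (sg (ε.2 j) * ρ x j) • L (e j) := by
      intro ε
      simp only [hxEdef]
      rw [map_sum]
      exact Finset.sum_congr rfl fun j _ => L.map_smul _ _
    have hLxEae : ∀ ε, ∀ᵐ a ∂μ,
        ⇑(L (xE ε)) a = ∑ j, sg (ε.2 j) * (ρ x j * ⇑(L (e j)) a) := by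
      intro ε
      have h2 := aeeqFun_coeFn_sum (μ := μ) Finset.univ
        (fun j => (sg (ε.2 j) * ρ x j) • L (e j))
      have h3 : ∀ᵐ a ∂μ, ∀ j,
          ((sg (ε.2 j) * ρ x j) • L (e j)) a = sg (ε.2 j) * (ρ x j * ⇑(L (e j)) a) := by
        rw [MeasureTheory.ae_all_iff]; intro j
        filter_upwards [AEEqFun.coeFn_smul (sg (ε.2 j) * ρ x j) (L (e j))] with a ha
        rw [ha]
        simp only [Pi.smul_apply, smul_eq_mul]
        ring
      filter_upwards [h2, h3] with a h2 h3
      rw [hLxE ε, h2]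
      exact Finset.sum_congr rfl fun j _ => h3 j
    -- the averaging identity
    have hmaster : ⇑(Ω ((x : Lp ℝ q μ)) - Lm (fun j => L (e j)) x) =ᵐ[μ]
        (((2:ℝ) ^ (n+1))⁻¹) • ∑ ε : Bool × (Fin n → Bool),
          ⇑(Ω ((x : Lp ℝ q μ)) - W ε * L (xE ε)) := by
      have hFae : ∀ᵐ a ∂μ, ∀ ε : Bool × (Fin n → Bool),
          ⇑(Ω ((x : Lp ℝ q μ)) - W ε * L (xE ε)) a
            = ⇑(Ω ((x : Lp ℝ q μ))) a - w ε a * ∑ j, sg (ε.2 j) * (ρ x j * ⇑(L (e j)) a) := by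
        rw [MeasureTheory.ae_all_iff]
        intro ε
        filter_upwards [AEEqFun.coeFn_sub (Ω ((x : Lp ℝ q μ))) (W ε * L (xE ε)),
          AEEqFun.coeFn_mul (W ε) (L (xE ε)), hWae ε, hLxEae ε] with a h1 h2 h3 h4
        rw [h1]
        simp only [Pi.sub_apply]
        rw [h2]
        simp only [Pi.mul_apply]
        rw [h3, h4]
      filter_upwards [AEEqFun.coeFn_sub (Ω ((x : Lp ℝ q μ))) (Lm (fun j => L (e j)) x),
        hLmae (fun j => L (e j)) x, hFae] with a h1 h2 hF
      rw [h1]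
      simp only [Pi.sub_apply, Pi.smul_apply, Finset.sum_apply, smul_eq_mul]
      rw [h2]
      have hsum : ∑ ε : Bool × (Fin n → Bool), ⇑(Ω ((x : Lp ℝ q μ)) - W ε * L (xE ε)) a
          = ∑ ε : Bool × (Fin n → Bool),
            (⇑(Ω ((x : Lp ℝ q μ))) a - w ε a * ∑ j, sg (ε.2 j) * (ρ x j * ⇑(L (e j)) a)) :=
        Finset.sum_congr rfl fun ε _ => hF ε
      rw [hsum, Finset.sum_sub_distrib, Finset.sum_const, Finset.card_univ, card_bool_pi n,
        nsmul_eq_mul]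
      have h2pos : ((2:ℝ) ^ (n+1)) ≠ 0 := by positivity
      by_cases hex2 : ∃ i, a ∈ A i
      · obtain ⟨i, hi⟩ := hex2
        have hw' : ∑ ε : Bool × (Fin n → Bool),
              w ε a * ∑ j, sg (ε.2 j) * (ρ x j * ⇑(L (e j)) a)
            = ∑ ε : Bool × (Fin n → Bool),
              sg (ε.2 i) * ∑ j, sg (ε.2 j) * (ρ x j * ⇑(L (e j)) a) :=
          Finset.sum_congr rfl fun ε _ => by rw [hw_on ε i a hi]
        have hkey : ∑ ε : Bool × (Fin n → Bool),
              sg (ε.2 i) * ∑ j, sg (ε.2 j) * (ρ x j * ⇑(L (e j)) a)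
            = 2 ^ (n+1) * (ρ x i * ⇑(L (e i)) a) := keyA i _
        have hL' : ∑ j, ρ x j * ((A j).indicator (fun _ => (1:ℝ)) a * ⇑(L (e j)) a)
            = ρ x i * ⇑(L (e i)) a := by
          rw [Finset.sum_eq_single i (fun j _ hj => by
            rw [Set.indicator_of_notMem (fun hAj => hAdisj i j (Ne.symm hj) a hi hAj),
              zero_mul, mul_zero])
            (fun h => absurd (Finset.mem_univ i) h), Set.indicator_of_mem hi, one_mul]
        rw [hw', hkey, hL']
        push_cast
        field_simp
      · push_neg at hex2
        have hw' : ∑ ε : Bool × (Fin n → Bool),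
              w ε a * ∑ j, sg (ε.2 j) * (ρ x j * ⇑(L (e j)) a)
            = ∑ ε : Bool × (Fin n → Bool),
              sg ε.1 * ∑ j, sg (ε.2 j) * (ρ x j * ⇑(L (e j)) a) :=
          Finset.sum_congr rfl fun ε _ => by rw [hw_off ε a hex2]
        have hkey : ∑ ε : Bool × (Fin n → Bool),
              sg ε.1 * ∑ j, sg (ε.2 j) * (ρ x j * ⇑(L (e j)) a) = 0 := keyB _
        have hL' : ∑ j, ρ x j * ((A j).indicator (fun _ => (1:ℝ)) a * ⇑(L (e j)) a) = 0 :=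
          Finset.sum_eq_zero fun j _ => by
            rw [Set.indicator_of_notMem (hex2 j), zero_mul, mul_zero]
        rw [hw', hkey, hL']
        push_cast
        field_simp
        ring
    -- conclusion
    calc eLpNorm (⇑(Ω ((x : Lp ℝ q μ)) - Lm (fun j => L (e j)) x)) q μ
        = eLpNorm ((((2:ℝ) ^ (n+1))⁻¹) • ∑ ε : Bool × (Fin n → Bool),
            ⇑(Ω ((x : Lp ℝ q μ)) - W ε * L (xE ε))) q μ := eLpNorm_congr_ae hmaster
      _ = (‖((2:ℝ) ^ (n+1))⁻¹‖₊ : ℝ≥0∞) * eLpNorm (∑ ε : Bool × (Fin n → Bool),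
            ⇑(Ω ((x : Lp ℝ q μ)) - W ε * L (xE ε))) q μ := eLpNorm_const_smul _ _ _ _
      _ ≤ (‖((2:ℝ) ^ (n+1))⁻¹‖₊ : ℝ≥0∞) * ∑ ε : Bool × (Fin n → Bool),
            eLpNorm (⇑(Ω ((x : Lp ℝ q μ)) - W ε * L (xE ε))) q μ :=
          mul_le_mul_right (eLpNorm_sum_le (fun ε _ => AEEqFun.aestronglyMeasurable _) hq1) _
      _ ≤ (‖((2:ℝ) ^ (n+1))⁻¹‖₊ : ℝ≥0∞) * ∑ _ε : Bool × (Fin n → Bool),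
            ENNReal.ofReal ((C + CΩ) * ‖(x : Lp ℝ q μ)‖) :=
          mul_le_mul_right (Finset.sum_le_sum fun ε _ => hFbound ε) _
      _ = ENNReal.ofReal ((C + CΩ) * ‖(x : Lp ℝ q μ)‖) := by
          rw [Finset.sum_const, Finset.card_univ, card_bool_pi n, nsmul_eq_mul, ← mul_assoc]
          have h1 : (‖((2:ℝ) ^ (n+1))⁻¹‖₊ : ℝ≥0∞) * ((2 ^ (n+1) : ℕ) : ℝ≥0∞) = 1 := by
            have h2 : ‖((2:ℝ) ^ (n+1))⁻¹‖₊ = ((2:ℝ≥0) ^ (n+1))⁻¹ := by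
              rw [nnnorm_inv, nnnorm_pow]; norm_num
            rw [h2, ENNReal.coe_inv (pow_ne_zero _ (by norm_num)), ENNReal.coe_pow]
            have h3 : ((2 ^ (n+1) : ℕ) : ℝ≥0∞) = ((2:ℝ≥0) : ℝ≥0∞) ^ (n+1) := by
              push_cast; norm_num
            rw [h3]
            exact ENNReal.inv_mul_cancel (pow_ne_zero _ (by norm_num))
              (ENNReal.pow_ne_top (by norm_num))
          rw [h1, one_mul]
end
end
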